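/- arXiv:2405.11709 — 3 statements merged into one kernel-verified Lean document; each statement's English description precedes it below -/
import Mathlib

section
/- For the kink solution K(x) = √(β/α) tanh(√(β/(2κ)) x) with energy E(K) = ∫_{−L}^{L} [F(K(x)) + (κ/2) K'(x)²] dx, one has E(K) = √(2κα) · K(L) · (β/α − K(L)²/3). -/
open Real Set Filter Topology MeasureTheory

lemma my_hasDerivAt_tanh (x : ℝ) : HasDerivAt Real.tanh (1 - Real.tanh x ^ 2) x := by
  have h := (Real.hasDerivAt_sinh x).fun_div (Real.hasDerivAt_cosh x) (Real.cosh_pos x).ne'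
  have he : Real.tanh = fun y => Real.sinh y / Real.cosh y := by
    funext y; exact Real.tanh_eq_sinh_div_cosh y
  rw [he]
  refine h.congr_deriv ?_
  have hc := (Real.cosh_pos x).ne'
  beta_reduce
  field_simp [Real.tanh_eq_sinh_div_cosh]

theorem stmt_3 (α β κ L : ℝ) (hα : 0 < α) (hβ : 0 < β) (hκ : 0 < κ) (hL : 0 < L)
    (F K : ℝ → ℝ)
    (hF : ∀ φ, F φ = α / 4 * (φ ^ 2 - β / α) ^ 2)
    (hK : ∀ x, K x = Real.sqrt (β / α) * Real.tanh (Real.sqrt (β / (2 * κ)) * x)) :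
    ∫ x in (-L)..L, (F (K x) + κ / 2 * (deriv K x) ^ 2)
      = Real.sqrt (2 * κ * α) * K L * (β / α - (K L) ^ 2 / 3) := by
  set a := Real.sqrt (β / α) with ha
  set b := Real.sqrt (β / (2 * κ)) with hb
  set s := Real.sqrt (2 * κ * α) with hs
  have ha2 : a ^ 2 = β / α := Real.sq_sqrt (by positivity)
  have hb2 : b ^ 2 = β / (2 * κ) := Real.sq_sqrt (by positivity)
  have hs2 : s ^ 2 = 2 * κ * α := Real.sq_sqrt (by positivity)
  have hbs : b * s = Real.sqrt (α * β) := by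
    rw [hb, hs, ← Real.sqrt_mul (by positivity)]
    congr 1; field_simp
  have hbsa : b * s * a = β := by
    rw [hbs, ha, ← Real.sqrt_mul (by positivity)]
    have : α * β * (β / α) = β ^ 2 := by field_simp
    rw [this, Real.sqrt_sq hβ.le]
  have key : s * a ^ 3 * b = β ^ 2 / α := by
    have h1 : s * a ^ 3 * b = (b * s * a) * a ^ 2 := by ring
    rw [h1, hbsa, ha2]; field_simp
  -- derivative of tanh (b * x)
  have htb : ∀ x : ℝ, HasDerivAt (fun y => Real.tanh (b * y))
      ((1 - Real.tanh (b * x) ^ 2) * b) x := by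
    intro x
    have hi : HasDerivAt (fun y : ℝ => b * y) b x := by
      simpa using (hasDerivAt_id x).const_mul b
    exact (my_hasDerivAt_tanh (b * x)).comp x hi
  -- deriv K
  have hKfun : K = fun x => a * Real.tanh (b * x) := funext hK
  have hKd : ∀ x : ℝ, deriv K x = a * ((1 - Real.tanh (b * x) ^ 2) * b) := by
    intro x
    rw [hKfun]
    exact (((htb x).const_mul a)).deriv
  -- antiderivative
  set g : ℝ → ℝ := fun x => s * a ^ 3 / 2 * (Real.tanh (b * x) - Real.tanh (b * x) ^ 3 / 3)
    with hg
  set g' : ℝ → ℝ := fun x => s * a ^ 3 / 2 *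
    ((1 - Real.tanh (b * x) ^ 2) * b - 3 * Real.tanh (b * x) ^ 2 * ((1 - Real.tanh (b * x) ^ 2) * b) / 3)
    with hg'
  have hgd : ∀ x : ℝ, HasDerivAt g (g' x) x := by
    intro x
    have h1 : HasDerivAt (fun y => Real.tanh (b * y) ^ 3)
        (3 * Real.tanh (b * x) ^ 2 * ((1 - Real.tanh (b * x) ^ 2) * b)) x := by
      have h := (htb x).fun_pow 3
      norm_num at h
      convert h using 1
      try ring
    exact (((htb x).sub (h1.div_const 3)).const_mul _)
  have hEq : ∀ x : ℝ, F (K x) + κ / 2 * (deriv K x) ^ 2 = g' x := by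
    intro x
    set t := Real.tanh (b * x) with ht
    rw [hF, hK, hKd]
    have e1 : (a * t) ^ 2 = β / α * t ^ 2 := by rw [mul_pow, ha2]
    have e2 : (a * ((1 - t ^ 2) * b)) ^ 2 = β / α * ((1 - t ^ 2) ^ 2 * (β / (2 * κ))) := by
      rw [mul_pow, ha2, mul_pow, hb2]
    rw [e1, e2]
    have e3 : g' x = β ^ 2 / α / 2 * (1 - t ^ 2) ^ 2 := by
      simp only [hg']
      linear_combination (1 - t ^ 2) ^ 2 / 2 * key
    rw [e3]
    field_simp
    ring
  have htanh : Continuous Real.tanh := by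
    have : Real.tanh = fun y => Real.sinh y / Real.cosh y := by
      funext y; exact Real.tanh_eq_sinh_div_cosh y
    rw [this]
    exact Real.continuous_sinh.div Real.continuous_cosh fun x => (Real.cosh_pos x).ne'
  have hct : Continuous (fun x : ℝ => Real.tanh (b * x)) :=
    htanh.comp (continuous_const.mul continuous_id)
  have hcont : Continuous g' := by
    rw [hg']
    exact continuous_const.mul
      (((continuous_const.sub (hct.pow 2)).mul continuous_const).sub
        (((continuous_const.mul (hct.pow 2)).mul
          ((continuous_const.sub (hct.pow 2)).mul continuous_const)).div_const 3))
  have hint : IntervalIntegrable (fun x => F (K x) + κ / 2 * (deriv K x) ^ 2)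
      MeasureTheory.volume (-L) L := by
    have : (fun x => F (K x) + κ / 2 * (deriv K x) ^ 2) = g' := funext hEq
    rw [this]
    exact hcont.intervalIntegrable _ _
  have hInt : ∫ x in (-L)..L, (F (K x) + κ / 2 * (deriv K x) ^ 2) = g L - g (-L) := by
    apply intervalIntegral.integral_eq_sub_of_hasDerivAt
    · intro x _
      rw [hEq x]
      exact hgd x
    · exact hint
  rw [hInt, hK]
  set T := Real.tanh (b * L) with hT
  have hneg : Real.tanh (b * (-L)) = -T := by
    rw [hT, ← Real.tanh_neg]; ring_nf
  rw [hg]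
  simp only [hneg]
  have hbL : Real.sqrt (β / (2 * κ)) * L = b * L := by rw [hb]
  rw [hbL]
  linear_combination (s * a * T) * ha2
end

section
/- Let F ∈ C⁴(ℝ) with F'(0) = 0 and F''(0) < 0. Then the period function p(a) = 4 ∫₀^a dy / √((2/κ)(F(y) − F(a))) satisfies lim_{a → 0⁺} p(a) = 2π √(κ / (−F''(0))). -/
open Real Set Filter Topology MeasureTheory intervalIntegral

lemma intA : IntervalIntegrable (fun x : ℝ => (Real.sqrt (1 - x^2))⁻¹) volume 0 1 := by
  have h1 : IntervalIntegrable (fun x : ℝ => x ^ (-(1/2) : ℝ)) volume 0 1 :=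
    intervalIntegral.intervalIntegrable_rpow' (by norm_num)
  have h2 : IntervalIntegrable (fun x : ℝ => (1 - x) ^ (-(1/2) : ℝ)) volume 0 1 := by
    simpa using (h1.comp_sub_left 1).symm
  apply h2.mono_fun
  · exact ((continuous_const.sub (continuous_pow 2)).sqrt.measurable.inv).aestronglyMeasurable
  · filter_upwards [ae_restrict_mem measurableSet_Ioc] with x hx
    rw [uIoc_of_le (by norm_num : (0:ℝ) ≤ 1)] at hx
    obtain ⟨hx0, hx1⟩ := hx
    have h1x : (0:ℝ) ≤ 1 - x := by linarith
    have heq : (1 - x) ^ (-(1/2) : ℝ) = (Real.sqrt (1 - x))⁻¹ := by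
      rw [Real.rpow_neg h1x, Real.sqrt_eq_rpow]
    rw [heq, Real.norm_eq_abs, Real.norm_eq_abs, abs_of_nonneg (by positivity),
      abs_of_nonneg (by positivity)]
    rcases eq_or_lt_of_le hx1 with h | h
    · simp [h]
    · have hlt : 0 < 1 - x := by linarith
      have hle : 1 - x ≤ 1 - x^2 := by nlinarith
      exact inv_anti₀ (Real.sqrt_pos.mpr hlt) (Real.sqrt_le_sqrt hle)

lemma intC : ∫ x in (0:ℝ)..1, (Real.sqrt (1 - x^2))⁻¹ = π/2 := by
  set f : ℝ → ℝ := fun x => (Real.sqrt (1 - x^2))⁻¹ with hf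
  set G : ℝ → ℝ := fun b => ∫ x in (0:ℝ)..b, f x with hG
  have hGb : ∀ b ∈ Ico (0:ℝ) 1, G b = Real.arcsin b := by
    intro b hb
    have : ∫ x in (0:ℝ)..b, f x = Real.arcsin b - Real.arcsin 0 := by
      apply intervalIntegral.integral_eq_sub_of_hasDerivAt
      · intro x hx
        rw [uIcc_of_le hb.1] at hx
        have h1 : x ≠ -1 := by intro h; rw [h] at hx; exact absurd hx.1 (by norm_num)
        have h2 : x ≠ 1 := by intro h; rw [h] at hx; nlinarith [hx.2, hb.2]
        simpa [hf, one_div] using Real.hasDerivAt_arcsin h1 h2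
      · apply intA.mono_set
        rw [uIcc_of_le hb.1, uIcc_of_le (by norm_num : (0:ℝ) ≤ 1)]
        exact Icc_subset_Icc le_rfl hb.2.le
    simpa [Real.arcsin_zero] using this
  have hcont : ContinuousOn G (Icc (0:ℝ) 1) := by
    have := intervalIntegral.continuousOn_primitive_interval
      (a := (0:ℝ)) (b := (1:ℝ)) (f := f) (μ := volume) ?_
    · rwa [uIcc_of_le (by norm_num : (0:ℝ) ≤ 1)] at this
    · rw [uIcc_of_le (by norm_num : (0:ℝ) ≤ 1), integrableOn_Icc_iff_integrableOn_Ioc]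
      simpa [intervalIntegrable_iff, uIoc_of_le (by norm_num : (0:ℝ) ≤ 1)] using intA
  haveI : (𝓝[Ioo (0:ℝ) 1] 1).NeBot := by
    rw [← mem_closure_iff_nhdsWithin_neBot, closure_Ioo (by norm_num : (0:ℝ) ≠ 1)]
    exact ⟨by norm_num, le_rfl⟩
  have h1 : Tendsto G (𝓝[Ioo (0:ℝ) 1] 1) (𝓝 (G 1)) :=
    ((hcont.continuousWithinAt (by norm_num [mem_Icc])).tendsto).mono_left
      (nhdsWithin_mono _ Ioo_subset_Icc_self)
  have h2 : Tendsto G (𝓝[Ioo (0:ℝ) 1] 1) (𝓝 (π/2)) := by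
    have harc : Tendsto Real.arcsin (𝓝[Ioo (0:ℝ) 1] 1) (𝓝 (π/2)) := by
      have := (Real.continuous_arcsin.tendsto 1).mono_left
        (nhdsWithin_le_nhds (s := Ioo (0:ℝ) 1))
      rwa [Real.arcsin_one] at this
    apply harc.congr'
    filter_upwards [eventually_mem_nhdsWithin] with b hb
    exact (hGb b ⟨hb.1.le, hb.2⟩).symm
  exact tendsto_nhds_unique h1 h2

lemma intD_int {a : ℝ} (ha : 0 < a) :
    IntervalIntegrable (fun y : ℝ => (Real.sqrt (a^2 - y^2))⁻¹) volume 0 a := by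
  have h := (intA.comp_mul_left (c := a⁻¹)).const_mul a⁻¹
  have ha' : a⁻¹ ≠ 0 := inv_ne_zero ha.ne'
  simp only [div_inv_eq_mul, zero_mul, one_mul] at h
  have : (fun y : ℝ => (Real.sqrt (a^2 - y^2))⁻¹)
      = fun y : ℝ => a⁻¹ * (Real.sqrt (1 - (a⁻¹ * y)^2))⁻¹ := by
    funext y
    have : a^2 - y^2 = a^2 * (1 - (a⁻¹*y)^2) := by field_simp
    rw [this, Real.sqrt_mul (sq_nonneg a), Real.sqrt_sq ha.le, mul_inv]
  rw [this]
  simpa [zero_mul, one_mul] using h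

lemma intD_val {a : ℝ} (ha : 0 < a) :
    ∫ y in (0:ℝ)..a, (Real.sqrt (a^2 - y^2))⁻¹ = π/2 := by
  have hrw : (fun y : ℝ => (Real.sqrt (a^2 - y^2))⁻¹)
      = fun y : ℝ => a⁻¹ * (Real.sqrt (1 - (a⁻¹ * y)^2))⁻¹ := by
    funext y
    have : a^2 - y^2 = a^2 * (1 - (a⁻¹*y)^2) := by field_simp
    rw [this, Real.sqrt_mul (sq_nonneg a), Real.sqrt_sq ha.le, mul_inv]
  rw [hrw]
  rw [intervalIntegral.integral_const_mul]
  rw [intervalIntegral.integral_comp_mul_left (fun x => (Real.sqrt (1 - x^2))⁻¹)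
    (inv_ne_zero ha.ne')]
  rw [mul_zero, inv_mul_cancel₀ ha.ne', intC]
  simp [smul_eq_mul]
  field_simp

set_option maxHeartbeats 1000000 in
theorem stmt_6 (κ : ℝ) (hκ : 0 < κ) (F : ℝ → ℝ) (hF : ContDiff ℝ 4 F)
    (hF'0 : deriv F 0 = 0) (hF''0 : iteratedDeriv 2 F 0 < 0)
    (hpos : ∃ ε > 0, ∀ a ∈ Ioo (0:ℝ) ε, ∀ y ∈ Ico (0:ℝ) a, F a < F y)
    (p : ℝ → ℝ)
    (hp : ∀ a, p a = 4 * ∫ y in (0:ℝ)..a, 1 / Real.sqrt ((2 / κ) * (F y - F a))) :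
    Tendsto p (𝓝[>] 0) (𝓝 (2 * Real.pi * Real.sqrt (κ / (-(iteratedDeriv 2 F 0))))) := by
  clear hpos
  set c : ℝ := -(iteratedDeriv 2 F 0) with hcdef
  have hcpos : 0 < c := neg_pos.mpr hF''0
  -- differentiability of deriv F at 0
  have hFd : Differentiable ℝ F := hF.differentiable (by norm_num)
  have hg : ContDiff ℝ 1 (deriv F) :=
    (contDiff_succ_iff_deriv.mp (hF.of_le (by norm_num))).2.2
  have hD2 : deriv (deriv F) 0 = -c := by
    rw [hcdef, neg_neg, show (2:ℕ) = 1 + 1 from rfl, iteratedDeriv_succ, iteratedDeriv_one]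
  have hder : HasDerivAt (deriv F) (-c) 0 := by
    have := ((hg.differentiable (by norm_num)) 0).hasDerivAt
    rwa [hD2] at this
  have ho := hasDerivAt_iff_isLittleO.mp hder
  rw [Metric.tendsto_nhdsWithin_nhds]
  intro η hη
  -- choose ε
  have hqcont : Tendsto (fun e : ℝ => 2*π*Real.sqrt (κ/(c-2*e)) - 2*π*Real.sqrt (κ/(c+2*e)))
      (𝓝 0) (𝓝 0) := by
    have hct : ContinuousAt
        (fun e : ℝ => 2*π*Real.sqrt (κ/(c-2*e)) - 2*π*Real.sqrt (κ/(c+2*e))) 0 := by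
      apply ContinuousAt.sub
      · exact continuousAt_const.mul (Real.continuous_sqrt.continuousAt.comp
          (ContinuousAt.div continuousAt_const (by fun_prop) (by simpa using hcpos.ne')))
      · exact continuousAt_const.mul (Real.continuous_sqrt.continuousAt.comp
          (ContinuousAt.div continuousAt_const (by fun_prop) (by simpa using hcpos.ne')))
    have h0 : (fun e : ℝ => 2*π*Real.sqrt (κ/(c-2*e)) - 2*π*Real.sqrt (κ/(c+2*e))) 0 = 0 := by
      norm_num
    simpa [h0] using hct.tendsto
  have hev : ∀ᶠ e in 𝓝[>] (0:ℝ), (0 < e ∧ e < c/2) ∧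
      2*π*Real.sqrt (κ/(c-2*e)) - 2*π*Real.sqrt (κ/(c+2*e)) < η := by
    refine Filter.Eventually.and (Filter.Eventually.and eventually_mem_nhdsWithin ?_) ?_
    · exact eventually_nhdsWithin_of_eventually_nhds (Iio_mem_nhds (half_pos hcpos))
    · exact (hqcont.mono_left nhdsWithin_le_nhds).eventually (eventually_lt_nhds hη)
  obtain ⟨ε, ⟨hε0, hεc⟩, hεη⟩ := hev.exists
  have hc2 : 0 < c - 2*ε := by linarith
  -- Taylor bound from little-o
  have hoe := ho.def hε0
  rw [Metric.eventually_nhds_iff] at hoe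
  obtain ⟨δ, hδ0, hδ⟩ := hoe
  refine ⟨δ, hδ0, ?_⟩
  intro a ha hdist
  have ha0 : (0:ℝ) < a := ha
  have haδ : a < δ := by rwa [Real.dist_eq, sub_zero, abs_of_pos ha0] at hdist
  -- derivative bound on [0,a]
  have hkey : ∀ y ∈ Icc (0:ℝ) a, ‖deriv F y + c * y‖ ≤ ε * a := by
    intro y hy
    have hyδ : dist y 0 < δ := by
      rw [Real.dist_eq, sub_zero, abs_of_nonneg hy.1]; exact lt_of_le_of_lt hy.2 haδ
    have h := hδ hyδ
    simp only [hF'0, sub_zero, smul_eq_mul, Real.norm_eq_abs] at h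
    have heq : deriv F y + c * y = deriv F y - y * (-c) := by ring
    rw [Real.norm_eq_abs, heq]
    calc |deriv F y - y * (-c)| ≤ ε * |y| := h
      _ ≤ ε * a := by
          rw [abs_of_nonneg hy.1]; exact mul_le_mul_of_nonneg_left hy.2 hε0.le
  -- MVT
  set R : ℝ → ℝ := fun t => F t + (c/2)*t^2 with hR
  have hRd : ∀ t ∈ Icc (0:ℝ) a, HasDerivWithinAt R (deriv F t + c * t) (Icc 0 a) t := by
    intro t ht
    have h1 : HasDerivAt F (deriv F t) t := (hFd t).hasDerivAt
    have h2 : HasDerivAt (fun t : ℝ => (c/2)*t^2) (c * t) t := by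
      have h := (hasDerivAt_pow 2 t).const_mul (c/2)
      exact h.congr_deriv (by push_cast; ring)
    exact (h1.add h2).hasDerivWithinAt
  have hMVT : ∀ y ∈ Icc (0:ℝ) a, ‖R a - R y‖ ≤ (ε*a) * ‖a - y‖ := fun y hy =>
    Convex.norm_image_sub_le_of_norm_hasDerivWithin_le hRd hkey (convex_Icc 0 a) hy
      ⟨ha0.le, le_rfl⟩
  -- sandwich
  have hsand : ∀ y ∈ Icc (0:ℝ) a,
      (c/2 - ε)*(a^2 - y^2) ≤ F y - F a ∧ F y - F a ≤ (c/2+ε)*(a^2-y^2) := by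
    intro y hy
    obtain ⟨hy1, hy2⟩ := hy
    have h1 := hMVT y ⟨hy1, hy2⟩
    rw [Real.norm_eq_abs, Real.norm_eq_abs, abs_of_nonneg (show (0:ℝ) ≤ a - y by linarith), abs_le] at h1
    have hRdiff : R a - R y = (F a - F y) + (c/2)*(a^2 - y^2) := by simp only [hR]; ring
    rw [hRdiff] at h1
    have hεy : 0 ≤ ε * (a - y) * y :=
      mul_nonneg (mul_nonneg hε0.le (by linarith)) hy1
    constructor <;> nlinarith [h1.1, h1.2]
  -- pointwise bounds on the integrand
  set m : ℝ := Real.sqrt ((c - 2*ε)/κ) with hm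
  set M : ℝ := Real.sqrt ((c + 2*ε)/κ) with hM
  have hmpos : 0 < m := Real.sqrt_pos.mpr (by positivity)
  have hMpos : 0 < M := Real.sqrt_pos.mpr (by positivity)
  have hub : ∀ y ∈ Icc (0:ℝ) a,
      (Real.sqrt ((2/κ)*(F y - F a)))⁻¹ ≤ m⁻¹ * (Real.sqrt (a^2 - y^2))⁻¹ := by
    intro y hy
    rcases eq_or_lt_of_le hy.2 with h | h
    · rw [h]; simp
    · have hZ : 0 < a^2 - y^2 := by nlinarith [hy.1]
      have h2 : ((c-2*ε)/κ)*(a^2-y^2) ≤ (2/κ)*(F y - F a) := by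
        have hmul := mul_le_mul_of_nonneg_left (hsand y hy).1 (by positivity : (0:ℝ) ≤ 2/κ)
        calc ((c-2*ε)/κ)*(a^2-y^2) = (2/κ)*((c/2-ε)*(a^2-y^2)) := by ring
          _ ≤ (2/κ)*(F y - F a) := hmul
      have hden : 0 < ((c-2*ε)/κ)*(a^2-y^2) := by positivity
      have hinv : (Real.sqrt ((2/κ)*(F y - F a)))⁻¹
          ≤ (Real.sqrt (((c-2*ε)/κ)*(a^2-y^2)))⁻¹ :=
        inv_anti₀ (Real.sqrt_pos.mpr hden) (Real.sqrt_le_sqrt h2)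
      rwa [Real.sqrt_mul (show (0:ℝ) ≤ (c-2*ε)/κ by positivity) (a^2-y^2), mul_inv, ← hm] at hinv
  have hlb : ∀ y ∈ Icc (0:ℝ) a,
      M⁻¹ * (Real.sqrt (a^2 - y^2))⁻¹ ≤ (Real.sqrt ((2/κ)*(F y - F a)))⁻¹ := by
    intro y hy
    rcases eq_or_lt_of_le hy.2 with h | h
    · rw [h]; simp
    · have hZ : 0 < a^2 - y^2 := by nlinarith [hy.1]
      have h2 : (2/κ)*(F y - F a) ≤ ((c+2*ε)/κ)*(a^2-y^2) := by
        have hmul := mul_le_mul_of_nonneg_left (hsand y hy).2 (by positivity : (0:ℝ) ≤ 2/κ)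
        calc (2/κ)*(F y - F a) ≤ (2/κ)*((c/2+ε)*(a^2-y^2)) := hmul
          _ = ((c+2*ε)/κ)*(a^2-y^2) := by ring
      have hden : 0 < (2/κ)*(F y - F a) := by
        have := (hsand y hy).1
        have : (0:ℝ) < (c/2-ε)*(a^2-y^2) := by
          apply mul_pos (by linarith) hZ
        nlinarith [(hsand y hy).1, (by positivity : (0:ℝ) < 2/κ)]
      have hinv : (Real.sqrt (((c+2*ε)/κ)*(a^2-y^2)))⁻¹
          ≤ (Real.sqrt ((2/κ)*(F y - F a)))⁻¹ :=
        inv_anti₀ (Real.sqrt_pos.mpr hden) (Real.sqrt_le_sqrt h2)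
      rwa [Real.sqrt_mul (show (0:ℝ) ≤ (c+2*ε)/κ by positivity) (a^2-y^2), mul_inv, ← hM] at hinv
  -- integrability
  have hbint : IntervalIntegrable (fun y : ℝ => m⁻¹ * (Real.sqrt (a^2-y^2))⁻¹) volume 0 a :=
    (intD_int ha0).const_mul _
  have hBint : IntervalIntegrable (fun y : ℝ => M⁻¹ * (Real.sqrt (a^2-y^2))⁻¹) volume 0 a :=
    (intD_int ha0).const_mul _
  have hfint : IntervalIntegrable (fun y : ℝ => (Real.sqrt ((2/κ)*(F y - F a)))⁻¹)
      volume 0 a := by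
    apply hbint.mono_fun
    · exact ((continuous_const.mul (hF.continuous.sub
        continuous_const)).sqrt.measurable.inv).aestronglyMeasurable
    · filter_upwards [ae_restrict_mem measurableSet_Ioc] with y hy
      rw [uIoc_of_le ha0.le] at hy
      have hy' : y ∈ Icc (0:ℝ) a := ⟨hy.1.le, hy.2⟩
      rw [Real.norm_eq_abs, Real.norm_eq_abs, abs_of_nonneg (by positivity),
        abs_of_nonneg (by positivity)]
      exact hub y hy'
  -- integral comparison
  have hIub : (∫ y in (0:ℝ)..a, (Real.sqrt ((2/κ)*(F y - F a)))⁻¹)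
      ≤ m⁻¹ * (π/2) := by
    have h := intervalIntegral.integral_mono_on ha0.le hfint hbint hub
    rwa [intervalIntegral.integral_const_mul, intD_val ha0] at h
  have hIlb : M⁻¹ * (π/2)
      ≤ (∫ y in (0:ℝ)..a, (Real.sqrt ((2/κ)*(F y - F a)))⁻¹) := by
    have h := intervalIntegral.integral_mono_on ha0.le hBint hfint hlb
    rwa [intervalIntegral.integral_const_mul, intD_val ha0] at h
  -- assemble
  have hpa : p a = 4 * ∫ y in (0:ℝ)..a, (Real.sqrt ((2/κ)*(F y - F a)))⁻¹ := by
    rw [hp a]; simp only [one_div]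
  have hminv : m⁻¹ = Real.sqrt (κ/(c-2*ε)) := by
    rw [hm, ← Real.sqrt_inv, inv_div]
  have hMinv : M⁻¹ = Real.sqrt (κ/(c+2*ε)) := by
    rw [hM, ← Real.sqrt_inv, inv_div]
  have hple : p a ≤ 2*π*Real.sqrt (κ/(c-2*ε)) := by
    rw [hpa, ← hminv]
    have := mul_le_mul_of_nonneg_left hIub (by norm_num : (0:ℝ) ≤ 4)
    linarith
  have hpge : 2*π*Real.sqrt (κ/(c+2*ε)) ≤ p a := by
    rw [hpa, ← hMinv]
    have := mul_le_mul_of_nonneg_left hIlb (by norm_num : (0:ℝ) ≤ 4)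
    linarith
  have hL1 : Real.sqrt (κ/(c+2*ε)) ≤ Real.sqrt (κ/c) :=
    Real.sqrt_le_sqrt (div_le_div_of_nonneg_left hκ.le hcpos (by linarith))
  have hL2 : Real.sqrt (κ/c) ≤ Real.sqrt (κ/(c-2*ε)) :=
    Real.sqrt_le_sqrt (div_le_div_of_nonneg_left hκ.le hc2 (by linarith))
  have h2π : (0:ℝ) ≤ 2*π := by positivity
  have hL1' := mul_le_mul_of_nonneg_left hL1 h2π
  have hL2' := mul_le_mul_of_nonneg_left hL2 h2π
  rw [Real.dist_eq, abs_lt]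
  constructor <;> linarith
end

section
/- For a ∈ (0, √(β/α)) with δ = √(2β/(α a²) − 1) > 1, the integral ∫₀¹ (1+z²) / [(1−z²)^{1/2}(δ²−z²)^{3/2}] dz is bounded below by (1/(√2 (1+δ)^{3/2})) · 1/(δ(δ−1)). -/
open Real Set MeasureTheory

lemma integrable_f (δ : ℝ) (hδ : 1 < δ) :
    IntervalIntegrable (fun z : ℝ => (1 + z ^ 2) /
      ((1 - z ^ 2) ^ ((1:ℝ)/2) * (δ ^ 2 - z ^ 2) ^ ((3:ℝ)/2))) volume 0 1 := by
  have hd1 : (0:ℝ) < δ^2 - 1 := by nlinarith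
  have hmaj : IntervalIntegrable (fun z : ℝ => 2 / (δ^2-1) ^ ((3:ℝ)/2) * (1 - z) ^ (-(1:ℝ)/2)) volume 0 1 := by
    have h0 : IntervalIntegrable (fun x : ℝ => x ^ (-(1:ℝ)/2)) volume 0 1 :=
      intervalIntegral.intervalIntegrable_rpow' (by norm_num)
    have h1 := (h0.comp_sub_left 1)
    simp only [sub_zero, sub_self] at h1
    exact (h1.symm.const_mul _)
  apply hmaj.mono_fun
  · apply Measurable.aestronglyMeasurable
    fun_prop
  · filter_upwards [ae_restrict_mem measurableSet_uIoc] with z hz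
    rw [uIoc_of_le (by norm_num : (0:ℝ) ≤ 1)] at hz
    obtain ⟨hz0, hz1⟩ := hz
    simp only [Real.norm_eq_abs]
    rcases eq_or_lt_of_le hz1 with rfl | hz1
    · simp [Real.zero_rpow, abs_nonneg]
    · have h1z : (0:ℝ) < 1 - z := by linarith
      have h1z2 : (0:ℝ) < 1 - z^2 := by nlinarith
      have hdz : (0:ℝ) < δ^2 - z^2 := by nlinarith
      rw [abs_of_nonneg (by positivity), abs_of_nonneg (by positivity)]
      rw [show (-(1:ℝ)/2) = -((1:ℝ)/2) by norm_num, Real.rpow_neg h1z.le,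
        ← div_eq_mul_inv, div_div]
      apply div_le_div₀ (by norm_num) (by nlinarith) (by positivity)
      rw [mul_comm ((δ^2-1) ^ ((3:ℝ)/2))]
      apply mul_le_mul (Real.rpow_le_rpow h1z.le (by nlinarith) (by norm_num))
        (Real.rpow_le_rpow hd1.le (by nlinarith) (by norm_num)) (by positivity) (by positivity)


lemma deriv_H (δ : ℝ) (hδ : 1 < δ) (z : ℝ) (hz : z < 1) :
    HasDerivAt (fun y => (2/(1-δ)) * (Real.sqrt (1-y) / Real.sqrt (δ-y)))
      (1 / (Real.sqrt (1-z) * (Real.sqrt (δ-z) * (δ-z)))) z := by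
  have h1z : (0:ℝ) < 1 - z := by linarith
  have hdz : (0:ℝ) < δ - z := by linarith
  have hA : HasDerivAt (fun y : ℝ => Real.sqrt (1-y)) (-1/(2*Real.sqrt (1-z))) z :=
    ((hasDerivAt_id z).const_sub 1).sqrt (ne_of_gt h1z)
  have hB : HasDerivAt (fun y : ℝ => Real.sqrt (δ-y)) (-1/(2*Real.sqrt (δ-z))) z :=
    ((hasDerivAt_id z).const_sub δ).sqrt (ne_of_gt hdz)
  have hq := (hA.div hB (ne_of_gt (Real.sqrt_pos.2 hdz))).const_mul (2/(1-δ))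
  refine hq.congr_deriv ?_
  symm
  have hA2 : Real.sqrt (1-z) ^ 2 = 1 - z := Real.sq_sqrt h1z.le
  have hB2 : Real.sqrt (δ-z) ^ 2 = δ - z := Real.sq_sqrt hdz.le
  have hApos := Real.sqrt_pos.2 h1z
  have hBpos := Real.sqrt_pos.2 hdz
  have h1δ : (1:ℝ) - δ ≠ 0 := by intro h; linarith
  rw [hB2]
  field_simp
  ring_nf
  linear_combination (-1:ℝ)*hA2 + hB2


lemma rpow_three_halves (x : ℝ) (hx : 0 ≤ x) : x ^ ((3:ℝ)/2) = Real.sqrt x * x := by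
  rcases eq_or_lt_of_le hx with rfl | hx
  · rw [Real.zero_rpow (by norm_num)]; simp
  · rw [show (3:ℝ)/2 = 1/2 + 1 by norm_num, Real.rpow_add hx, Real.rpow_one,
      ← Real.sqrt_eq_rpow]

lemma pointwise_bd (δ z : ℝ) (hδ : 1 < δ) (hz0 : 0 ≤ z) (hz1 : z < 1) :
    1/(Real.sqrt 2 * (1+δ)^((3:ℝ)/2)) * (1/(Real.sqrt (1-z) * (Real.sqrt (δ-z)*(δ-z)))) ≤
    (1+z^2) / ((1-z^2)^((1:ℝ)/2) * (δ^2-z^2)^((3:ℝ)/2)) := by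
  have h1z : (0:ℝ) < 1-z := by linarith
  have h1z' : (0:ℝ) < 1+z := by linarith
  have hdz : (0:ℝ) < δ-z := by linarith
  have hdz' : (0:ℝ) < δ+z := by linarith
  have h1δ : (0:ℝ) < 1+δ := by linarith
  have e1 : (1-z^2)^((1:ℝ)/2) = Real.sqrt (1-z) * Real.sqrt (1+z) := by
    rw [← Real.sqrt_eq_rpow, show (1:ℝ)-z^2 = (1-z)*(1+z) by ring, Real.sqrt_mul h1z.le]
  have e2 : (δ^2-z^2)^((3:ℝ)/2)
      = (Real.sqrt (δ-z)*(δ-z)) * (Real.sqrt (δ+z)*(δ+z)) := by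
    rw [rpow_three_halves _ (by nlinarith), show δ^2-z^2 = (δ-z)*(δ+z) by ring,
      Real.sqrt_mul hdz.le]
    ring
  have e3 : (1+δ)^((3:ℝ)/2) = Real.sqrt (1+δ) * (1+δ) := rpow_three_halves _ h1δ.le
  rw [e1, e2, e3, div_mul_div_comm, one_mul]
  have hB : Real.sqrt (1+z) ≤ Real.sqrt 2 := Real.sqrt_le_sqrt (by linarith)
  have hQ : Real.sqrt (δ+z) ≤ Real.sqrt (1+δ) := Real.sqrt_le_sqrt (by linarith)
  have hA := Real.sqrt_pos.2 h1z
  have hP := Real.sqrt_pos.2 hdz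
  have hBp := Real.sqrt_pos.2 h1z'
  have hQp := Real.sqrt_pos.2 hdz'
  apply div_le_div₀ (by positivity) (by nlinarith) (by positivity)
  have key : Real.sqrt (1+z) * (Real.sqrt (δ+z) * (δ+z))
      ≤ Real.sqrt 2 * (Real.sqrt (1+δ) * (1+δ)) :=
    mul_le_mul hB (mul_le_mul hQ (by linarith) hdz'.le (Real.sqrt_nonneg _))
      (by positivity) (Real.sqrt_nonneg _)
  calc Real.sqrt (1-z) * Real.sqrt (1+z) * ((Real.sqrt (δ-z)*(δ-z)) * (Real.sqrt (δ+z)*(δ+z)))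
      = (Real.sqrt (1-z) * (Real.sqrt (δ-z)*(δ-z))) * (Real.sqrt (1+z) * (Real.sqrt (δ+z)*(δ+z))) := by ring
    _ ≤ (Real.sqrt (1-z) * (Real.sqrt (δ-z)*(δ-z))) * (Real.sqrt 2 * (Real.sqrt (1+δ)*(1+δ))) :=
        mul_le_mul_of_nonneg_left key (by positivity)
    _ = Real.sqrt 2 * (Real.sqrt (1+δ)*(1+δ)) * (Real.sqrt (1-z) * (Real.sqrt (δ-z)*(δ-z))) := by ring


lemma numeric_bd (δ : ℝ) (hδ : 1 < δ) :
    1 / (δ * (δ - 1)) ≤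
      (2/(1-δ)) * (Real.sqrt (1-(1 - (δ-1)/(8*δ^2))) / Real.sqrt (δ-(1 - (δ-1)/(8*δ^2))))
        - (2/(1-δ)) * (Real.sqrt (1-0) / Real.sqrt (δ-0)) := by
  have hδ0 : (0:ℝ) < δ := by linarith
  set t : ℝ := 1 - (δ-1)/(8*δ^2) with htdef
  have h1t : 1 - t = (δ-1)/(8*δ^2) := by rw [htdef]; ring
  have h1tpos : 0 < 1 - t := by rw [h1t]; exact div_pos (by linarith) (by positivity)
  have hdt : δ - 1 ≤ δ - t := by linarith
  have hdtpos : 0 < δ - t := by linarith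
  set u := Real.sqrt (1-t) with hu
  set v := Real.sqrt (δ-t) with hv
  set s := Real.sqrt δ with hs
  have hs1 : 1 ≤ s := by
    rw [hs, show (1:ℝ) = Real.sqrt 1 by simp]
    exact Real.sqrt_le_sqrt hδ.le
  have hs0 : 0 < s := by linarith
  have hs2 : s^2 = δ := Real.sq_sqrt hδ0.le
  have hsδ : s ≤ δ := by nlinarith
  have hw0 : (0:ℝ) < Real.sqrt 2 := by positivity
  have hw1 : 1 ≤ Real.sqrt 2 := by
    rw [show (1:ℝ) = Real.sqrt 1 by simp]
    exact Real.sqrt_le_sqrt (by norm_num)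
  have hvpos : 0 < v := Real.sqrt_pos.2 hdtpos
  have hueq : u * (2 * Real.sqrt 2 * δ) = Real.sqrt (δ - 1) := by
    have h8 : Real.sqrt (8*δ^2) = 2 * Real.sqrt 2 * δ := by
      rw [show (8:ℝ)*δ^2 = (2*Real.sqrt 2*δ)^2 from by
        have := Real.sq_sqrt (by norm_num : (0:ℝ) ≤ 2); nlinarith]
      exact Real.sqrt_sq (by positivity)
    rw [hu, ← h8, ← Real.sqrt_mul h1tpos.le]
    congr 1
    rw [h1t]
    field_simp
  have huv : u * (2 * Real.sqrt 2 * δ) ≤ v := by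
    rw [hueq, hv]
    exact Real.sqrt_le_sqrt hdt
  have huv' : u / v ≤ 1 / (2 * Real.sqrt 2 * δ) := by
    rw [div_le_div_iff₀ hvpos (by positivity)]
    linarith
  have h1 : 1 / (2 * Real.sqrt 2 * δ) ≤ 1 / (2 * δ) := by
    apply one_div_le_one_div_of_le (by positivity)
    nlinarith
  have h2 : 1 / δ ≤ 1 / s := one_div_le_one_div_of_le hs0 hsδ
  have h3 : 1 / (2*δ) ≤ 1 / s - u / v := by
    have : 1/δ - 1/(2*δ) = 1/(2*δ) := by field_simp; ring
    linarith
  have e : (2/(1-δ)) * (u/v) - (2/(1-δ)) * (Real.sqrt (1-0) / Real.sqrt (δ-0))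
      = (2/(δ-1)) * (1/s - u/v) := by
    have hne : (1:ℝ) - δ ≠ 0 := by intro h; linarith
    have hne' : δ - (1:ℝ) ≠ 0 := by intro h; linarith
    simp only [sub_zero, Real.sqrt_one, ← hs]
    field_simp
    ring
  rw [e]
  calc 1 / (δ * (δ - 1)) = (2/(δ-1)) * (1/(2*δ)) := by
        rw [div_mul_div_comm, mul_one, div_eq_div_iff (by nlinarith) (by nlinarith)]
        ring
    _ ≤ (2/(δ-1)) * (1/s - u/v) :=
        mul_le_mul_of_nonneg_left h3 (div_nonneg (by norm_num) (by linarith))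

theorem stmt_10 (δ : ℝ) (hδ : 1 < δ) :
    (1 / (Real.sqrt 2 * (1 + δ) ^ ((3:ℝ)/2))) * (1 / (δ * (δ - 1)))
      ≤ ∫ z in (0:ℝ)..1, (1 + z ^ 2) /
          ((1 - z ^ 2) ^ ((1:ℝ)/2) * (δ ^ 2 - z ^ 2) ^ ((3:ℝ)/2)) := by
  set f : ℝ → ℝ := fun z => (1 + z ^ 2) /
      ((1 - z ^ 2) ^ ((1:ℝ)/2) * (δ ^ 2 - z ^ 2) ^ ((3:ℝ)/2)) with hf
  set c : ℝ := 1 / (Real.sqrt 2 * (1 + δ) ^ ((3:ℝ)/2)) with hc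
  set t : ℝ := 1 - (δ-1)/(8*δ^2) with htdef
  have hδ0 : (0:ℝ) < δ := by linarith
  have h1t : 1 - t = (δ-1)/(8*δ^2) := by rw [htdef]; ring
  have h1tpos : 0 < 1 - t := by
    rw [h1t]; exact div_pos (by linarith) (by positivity)
  have ht1 : t < 1 := by linarith
  have ht0 : 0 < t := by
    rw [htdef]
    have : (δ-1)/(8*δ^2) < 1 := by
      rw [div_lt_one (by positivity)]; nlinarith
    linarith
  have hfint := integrable_f δ hδ
  have hf_nonneg : ∀ z ∈ Set.Icc (0:ℝ) 1, 0 ≤ f z := by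
    intro z hz
    have h1 : (0:ℝ) ≤ 1 - z^2 := by nlinarith [hz.1, hz.2]
    have h2 : (0:ℝ) ≤ δ^2 - z^2 := by nlinarith [hz.1, hz.2]
    rw [hf]
    have := Real.rpow_nonneg h1 ((1:ℝ)/2)
    have := Real.rpow_nonneg h2 ((3:ℝ)/2)
    positivity
  have hsub1 : Set.uIcc (0:ℝ) t ⊆ Set.uIcc (0:ℝ) 1 := by
    rw [uIcc_of_le ht0.le, uIcc_of_le (by norm_num : (0:ℝ) ≤ 1)]
    exact Icc_subset_Icc le_rfl ht1.le
  have hsub2 : Set.uIcc t (1:ℝ) ⊆ Set.uIcc (0:ℝ) 1 := by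
    rw [uIcc_of_le ht1.le, uIcc_of_le (by norm_num : (0:ℝ) ≤ 1)]
    exact Icc_subset_Icc ht0.le le_rfl
  have hint1 : IntervalIntegrable f volume 0 t := hfint.mono_set hsub1
  have hint2 : IntervalIntegrable f volume t 1 := hfint.mono_set hsub2
  have hsplit : (∫ z in (0:ℝ)..t, f z) + (∫ z in t..(1:ℝ), f z) = ∫ z in (0:ℝ)..1, f z :=
    intervalIntegral.integral_add_adjacent_intervals hint1 hint2
  have htail : 0 ≤ ∫ z in t..(1:ℝ), f z := by
    apply intervalIntegral.integral_nonneg ht1.le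
    intro u hu
    exact hf_nonneg u ⟨le_trans ht0.le hu.1, hu.2⟩
  set g0 : ℝ → ℝ := fun z => 1/(Real.sqrt (1-z) * (Real.sqrt (δ-z)*(δ-z))) with hg0
  have hg0cont : ContinuousOn g0 (Set.uIcc (0:ℝ) t) := by
    rw [uIcc_of_le ht0.le]
    apply ContinuousOn.div continuousOn_const
    · fun_prop
    · intro x hx
      have hx1 : x < 1 := lt_of_le_of_lt hx.2 ht1
      have h1x : (0:ℝ) < 1 - x := by linarith
      have hdx : (0:ℝ) < δ - x := by linarith
      have := Real.sqrt_pos.2 h1x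
      have := Real.sqrt_pos.2 hdx
      positivity
  have hg0int : IntervalIntegrable g0 volume 0 t := hg0cont.intervalIntegrable
  have hftc : (∫ z in (0:ℝ)..t, g0 z)
      = (2/(1-δ)) * (Real.sqrt (1-t) / Real.sqrt (δ-t))
        - (2/(1-δ)) * (Real.sqrt (1-(0:ℝ)) / Real.sqrt (δ-(0:ℝ))) := by
    exact intervalIntegral.integral_eq_sub_of_hasDerivAt
      (f := fun y => (2/(1-δ)) * (Real.sqrt (1-y) / Real.sqrt (δ-y)))
      (fun x hx => deriv_H δ hδ x
        (lt_of_le_of_lt ((uIcc_of_le ht0.le ▸ hx).2) ht1)) hg0int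
  have hcomp : (∫ z in (0:ℝ)..t, c * g0 z) ≤ ∫ z in (0:ℝ)..t, f z := by
    apply intervalIntegral.integral_mono_on ht0.le (hg0int.const_mul c) hint1
    intro x hx
    exact pointwise_bd δ x hδ hx.1 (lt_of_le_of_lt hx.2 ht1)
  rw [intervalIntegral.integral_const_mul] at hcomp
  have hkey : 1 / (δ * (δ - 1)) ≤ ∫ z in (0:ℝ)..t, g0 z := by
    rw [hftc, htdef]
    exact numeric_bd δ hδ
  have hcpos : 0 ≤ c := by
    rw [hc]
    have := Real.rpow_nonneg (by linarith : (0:ℝ) ≤ 1+δ) ((3:ℝ)/2)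
    positivity
  calc c * (1 / (δ * (δ - 1)))
      ≤ c * ∫ z in (0:ℝ)..t, g0 z := mul_le_mul_of_nonneg_left hkey hcpos
    _ ≤ ∫ z in (0:ℝ)..t, f z := hcomp
    _ ≤ ∫ z in (0:ℝ)..1, f z := by linarith
end
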